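/- Let r₁, r₂, r₃ > 0 be pairwise distinct and q₁, q₂, q₃ > 0, and let E(α₁, α₂) = q₂q₃/d₁(α₁) + q₃q₁/d₂(α₂) + q₁q₂/d₃(2π − α₁ − α₂) be the Coulomb energy of the orbitally constrained triple. Then the Hessian matrix of E at (α₁, α₂) = (0, 0) (the configuration with all three points on one ray) is negative definite; in particular, (0,0) is a nondegenerate local maximum of E for every choice of positive charges. -/

import Mathlib

/-- Distance between two points on concentric circles of radii `a`, `b` with central
angle `α` (cosine rule). -/
noncomputable def chordDist (a b α : ℝ) : ℝ :=
  Real.sqrt (a ^ 2 + b ^ 2 - 2 * a * b * Real.cos α)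

/-- Coulomb energy of three charges on concentric circles of radii `r₁, r₂, r₃`, as a
function of the central angles `(α₁, α₂)` (with `α₃ = 2π − α₁ − α₂`). -/
noncomputable def orbitalEnergy (q1 q2 q3 r1 r2 r3 : ℝ) (p : ℝ × ℝ) : ℝ :=
  q2 * q3 / chordDist r2 r3 p.1 + q3 * q1 / chordDist r3 r1 p.2 +
    q1 * q2 / chordDist r1 r2 (2 * Real.pi - p.1 - p.2)

lemma sq_sub_pos {a b : ℝ} (ha : 0 < a) (hb : 0 < b) (hab : a ≠ b) (α : ℝ) :
    0 < a ^ 2 + b ^ 2 - 2 * a * b * Real.cos α := by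
  have h0 : 0 < (a - b) ^ 2 := by
    have := sub_ne_zero.mpr hab; positivity
  nlinarith [Real.cos_le_one α, mul_pos ha hb]

lemma chordDist_pos {a b : ℝ} (ha : 0 < a) (hb : 0 < b) (hab : a ≠ b) (α : ℝ) :
    0 < chordDist a b α :=
  Real.sqrt_pos.mpr (sq_sub_pos ha hb hab α)

lemma chordDist_ge {a b : ℝ} (ha : 0 < a) (hb : 0 < b) (α β : ℝ)
    (hβ : Real.cos β = 1) : chordDist a b β ≤ chordDist a b α := by
  unfold chordDist
  apply Real.sqrt_le_sqrt
  nlinarith [Real.cos_le_one α, mul_pos ha hb]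

lemma hasDerivAt_S (a b α : ℝ) :
    HasDerivAt (fun t => a ^ 2 + b ^ 2 - 2 * a * b * Real.cos t) (2 * a * b * Real.sin α) α := by
  have h := ((Real.hasDerivAt_cos α).const_mul (2 * a * b)).const_sub (a ^ 2 + b ^ 2)
  refine h.congr_deriv ?_
  ring

lemma hasDerivAt_chord {a b : ℝ} (ha : 0 < a) (hb : 0 < b) (hab : a ≠ b) (α : ℝ) :
    HasDerivAt (fun t => chordDist a b t)
      (a * b * Real.sin α / chordDist a b α) α := by
  have hpos := sq_sub_pos ha hb hab α
  have h := (hasDerivAt_S a b α).sqrt (ne_of_gt hpos)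
  refine h.congr_deriv ?_
  unfold chordDist
  rw [eq_div_iff (by positivity)]
  field_simp

lemma hasDerivAt_inv_chord {a b : ℝ} (c : ℝ) (ha : 0 < a) (hb : 0 < b) (hab : a ≠ b) (α : ℝ) :
    HasDerivAt (fun t => c / chordDist a b t)
      (-(c * (a * b * Real.sin α)) / (chordDist a b α) ^ 3) α := by
  have hD := chordDist_pos ha hb hab α
  have h := (hasDerivAt_const α c).div (hasDerivAt_chord ha hb hab α) (ne_of_gt hD)
  refine h.congr_deriv ?_
  rw [div_eq_div_iff (by positivity) (by positivity)]
  field_simp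
  ring

lemma hasDerivAt_phi {a b : ℝ} (c : ℝ) (ha : 0 < a) (hb : 0 < b) (hab : a ≠ b) (α : ℝ)
    (hsin : Real.sin α = 0) :
    HasDerivAt (fun t => -(c * (a * b * Real.sin t)) / (chordDist a b t) ^ 3)
      (-(c * (a * b * Real.cos α)) / (chordDist a b α) ^ 3) α := by
  have hD := chordDist_pos ha hb hab α
  have hN : HasDerivAt (fun t => -(c * (a * b * Real.sin t)))
      (-(c * (a * b * Real.cos α))) α :=
    (((Real.hasDerivAt_sin α).const_mul (a*b)).const_mul c).neg
  have hP : HasDerivAt (fun t => (chordDist a b t) ^ 3)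
      ((3:ℕ) * (chordDist a b α) ^ 2 * (a * b * Real.sin α / chordDist a b α)) α :=
    (hasDerivAt_chord ha hb hab α).pow 3
  have h := hN.div hP (by positivity)
  refine h.congr_deriv ?_
  rw [hsin]
  rw [div_eq_div_iff (by positivity) (by positivity)]
  ring

lemma psi_neg {q q' a b : ℝ} (hq : 0 < q) (hq' : 0 < q') (ha : 0 < a) (hb : 0 < b)
    (hab : a ≠ b) (α : ℝ) (hc : Real.cos α = 1) :
    -(q * q' * (a * b * Real.cos α)) / (chordDist a b α) ^ 3 < 0 := by
  have hD := chordDist_pos ha hb hab α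
  apply div_neg_of_neg_of_pos
  · rw [hc]; nlinarith [mul_pos (mul_pos hq hq') (mul_pos ha hb)]
  · positivity

lemma quad_neg {a1 a2 a3 x1 x2 : ℝ} (h1 : a1 < 0) (h2 : a2 < 0) (h3 : a3 < 0)
    (hx : x1 ≠ 0 ∨ x2 ≠ 0) :
    a1 * x1 * x1 + a2 * x2 * x2 + a3 * (0 - x1 - x2) * (0 - x1 - x2) < 0 := by
  rcases hx with h | h
  · have hsq : 0 < x1 ^ 2 := by positivity
    nlinarith [sq_nonneg x2, sq_nonneg (x1 + x2),
      mul_nonneg (le_of_lt (neg_pos.mpr h2)) (sq_nonneg x2),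
      mul_nonneg (le_of_lt (neg_pos.mpr h3)) (sq_nonneg (x1 + x2)),
      mul_pos (neg_pos.mpr h1) hsq]
  · have hsq : 0 < x2 ^ 2 := by positivity
    nlinarith [sq_nonneg x1, sq_nonneg (x1 + x2),
      mul_nonneg (le_of_lt (neg_pos.mpr h1)) (sq_nonneg x1),
      mul_nonneg (le_of_lt (neg_pos.mpr h3)) (sq_nonneg (x1 + x2)),
      mul_pos (neg_pos.mpr h2) hsq]

lemma term_le {q a b : ℝ} (hq : 0 ≤ q) (ha : 0 < a) (hb : 0 < b) (hab : a ≠ b)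
    (α β : ℝ) (hβ : Real.cos β = 1) :
    q / chordDist a b α ≤ q / chordDist a b β :=
  div_le_div_of_nonneg_left hq (chordDist_pos ha hb hab β) (chordDist_ge ha hb α β hβ)

set_option maxHeartbeats 1000000 in
/-- The Hessian of the orbital Coulomb energy at `(α₁, α₂) = (0, 0)` (all
three points on one ray) is negative definite, and `(0,0)` is a local maximum, for every
choice of positive charges. -/
theorem orbital_hessian_neg_def_at_ray
    (r1 r2 r3 q1 q2 q3 : ℝ)
    (hr1 : 0 < r1) (hr2 : 0 < r2) (hr3 : 0 < r3)
    (h12 : r1 ≠ r2) (h23 : r2 ≠ r3) (h31 : r3 ≠ r1)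
    (hq1 : 0 < q1) (hq2 : 0 < q2) (hq3 : 0 < q3) :
    (∀ v : ℝ × ℝ, v ≠ 0 →
      fderiv ℝ (fderiv ℝ (orbitalEnergy q1 q2 q3 r1 r2 r3)) ((0 : ℝ), (0 : ℝ)) v v < 0) ∧
    IsLocalMax (orbitalEnergy q1 q2 q3 r1 r2 r3) ((0 : ℝ), (0 : ℝ)) := by
  have h32 : r3 ≠ r2 := fun h => h23 h.symm
  have h13 : r1 ≠ r3 := fun h => h31 h.symm
  have hcos0 : Real.cos (0:ℝ) = 1 := Real.cos_zero
  have hcos2π : Real.cos (2 * Real.pi - 0 - 0) = 1 := by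
    norm_num [Real.cos_two_pi]
  have hsin2π : Real.sin (2 * Real.pi - 0 - 0) = 0 := by
    norm_num [Real.sin_two_pi]
  constructor
  · -- Hessian part
    set u : ℝ × ℝ →L[ℝ] ℝ := ContinuousLinearMap.fst ℝ ℝ ℝ with hu
    set w : ℝ × ℝ →L[ℝ] ℝ := ContinuousLinearMap.snd ℝ ℝ ℝ with hw
    set m : ℝ × ℝ →L[ℝ] ℝ := 0 - ContinuousLinearMap.fst ℝ ℝ ℝ - ContinuousLinearMap.snd ℝ ℝ ℝ with hm
    have hσ : ∀ p : ℝ × ℝ, HasFDerivAt (fun p : ℝ × ℝ => 2 * Real.pi - p.1 - p.2) m p := by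
      intro p
      exact ((hasFDerivAt_const (2 * Real.pi) p).sub hasFDerivAt_fst).sub hasFDerivAt_snd
    set φ1 : ℝ → ℝ := fun t => -(q2 * q3 * (r2 * r3 * Real.sin t)) / (chordDist r2 r3 t) ^ 3 with hφ1
    set φ2 : ℝ → ℝ := fun t => -(q3 * q1 * (r3 * r1 * Real.sin t)) / (chordDist r3 r1 t) ^ 3 with hφ2
    set φ3 : ℝ → ℝ := fun t => -(q1 * q2 * (r1 * r2 * Real.sin t)) / (chordDist r1 r2 t) ^ 3 with hφ3
    set G : ℝ × ℝ → (ℝ × ℝ →L[ℝ] ℝ) := fun p =>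
      φ1 p.1 • u + φ2 p.2 • w + φ3 (2 * Real.pi - p.1 - p.2) • m with hG
    have hE : ∀ p : ℝ × ℝ, HasFDerivAt (orbitalEnergy q1 q2 q3 r1 r2 r3) (G p) p := by
      intro p
      have h1 : HasFDerivAt (fun p : ℝ × ℝ => q2 * q3 / chordDist r2 r3 p.1) (φ1 p.1 • u) p :=
        (hasDerivAt_inv_chord (q2 * q3) hr2 hr3 h23 p.1).comp_hasFDerivAt p hasFDerivAt_fst
      have h2 : HasFDerivAt (fun p : ℝ × ℝ => q3 * q1 / chordDist r3 r1 p.2) (φ2 p.2 • w) p :=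
        (hasDerivAt_inv_chord (q3 * q1) hr3 hr1 h31 p.2).comp_hasFDerivAt p hasFDerivAt_snd
      have h3 : HasFDerivAt (fun p : ℝ × ℝ => q1 * q2 / chordDist r1 r2 (2 * Real.pi - p.1 - p.2))
          (φ3 (2 * Real.pi - p.1 - p.2) • m) p :=
        (hasDerivAt_inv_chord (q1 * q2) hr1 hr2 h12 (2 * Real.pi - p.1 - p.2)).comp_hasFDerivAt
          (f := fun p : ℝ × ℝ => 2 * Real.pi - p.1 - p.2) p (hσ p)
      exact (h1.add h2).add h3
    have hfd : fderiv ℝ (orbitalEnergy q1 q2 q3 r1 r2 r3) = G := funext fun p => (hE p).fderiv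
    set ψ1 : ℝ := -(q2 * q3 * (r2 * r3 * Real.cos 0)) / (chordDist r2 r3 0) ^ 3 with hψ1
    set ψ2 : ℝ := -(q3 * q1 * (r3 * r1 * Real.cos 0)) / (chordDist r3 r1 0) ^ 3 with hψ2
    set ψ3 : ℝ := -(q1 * q2 * (r1 * r2 * Real.cos (2 * Real.pi - 0 - 0))) /
      (chordDist r1 r2 (2 * Real.pi - 0 - 0)) ^ 3 with hψ3
    set H : ℝ × ℝ →L[ℝ] (ℝ × ℝ →L[ℝ] ℝ) :=
      (ψ1 • u).smulRight u + (ψ2 • w).smulRight w + (ψ3 • m).smulRight m with hH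
    have hGH : HasFDerivAt G H ((0 : ℝ), (0 : ℝ)) := by
      have t1 : HasFDerivAt (fun p : ℝ × ℝ => φ1 p.1 • u) ((ψ1 • u).smulRight u)
          ((0 : ℝ), (0 : ℝ)) :=
        (((hasDerivAt_phi (q2 * q3) hr2 hr3 h23 0 Real.sin_zero).comp_hasFDerivAt
          (f := Prod.fst) ((0 : ℝ), (0 : ℝ)) hasFDerivAt_fst).smul_const u)
      have t2 : HasFDerivAt (fun p : ℝ × ℝ => φ2 p.2 • w) ((ψ2 • w).smulRight w)
          ((0 : ℝ), (0 : ℝ)) :=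
        (((hasDerivAt_phi (q3 * q1) hr3 hr1 h31 0 Real.sin_zero).comp_hasFDerivAt
          (f := Prod.snd) ((0 : ℝ), (0 : ℝ)) hasFDerivAt_snd).smul_const w)
      have t3 : HasFDerivAt (fun p : ℝ × ℝ => φ3 (2 * Real.pi - p.1 - p.2) • m)
          ((ψ3 • m).smulRight m) ((0 : ℝ), (0 : ℝ)) :=
        (((hasDerivAt_phi (q1 * q2) hr1 hr2 h12 (2 * Real.pi - 0 - 0) hsin2π).comp_hasFDerivAt
          (f := fun p : ℝ × ℝ => 2 * Real.pi - p.1 - p.2) ((0 : ℝ), (0 : ℝ)) (hσ ((0 : ℝ), (0 : ℝ)))).smul_const m)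
      exact (t1.add t2).add t3
    intro x hx
    rw [hfd, hGH.fderiv]
    have hx12 : x.1 ≠ 0 ∨ x.2 ≠ 0 := by
      by_contra h
      push_neg at h
      exact hx (Prod.ext h.1 h.2)
    have hD1 := chordDist_pos hr2 hr3 h23 0
    have hD2 := chordDist_pos hr3 hr1 h31 0
    have hD3 := chordDist_pos hr1 hr2 h12 (2 * Real.pi - 0 - 0)
    have hψ1neg : ψ1 < 0 := psi_neg hq2 hq3 hr2 hr3 h23 0 hcos0
    have hψ2neg : ψ2 < 0 := psi_neg hq3 hq1 hr3 hr1 h31 0 hcos0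
    have hψ3neg : ψ3 < 0 := psi_neg hq1 hq2 hr1 hr2 h12 _ hcos2π
    have hval : H x x = ψ1 * x.1 * x.1 + ψ2 * x.2 * x.2 +
        ψ3 * (0 - x.1 - x.2) * (0 - x.1 - x.2) := by
      simp [hH, hm, hu, hw, ContinuousLinearMap.smulRight_apply, smul_eq_mul]
      try ring
    rw [hval]
    exact quad_neg hψ1neg hψ2neg hψ3neg hx12
  ·
    apply Filter.Eventually.of_forall
    intro p
    have t1 := term_le (le_of_lt (mul_pos hq2 hq3)) hr2 hr3 h23 p.1 0 hcos0
    have t2 := term_le (le_of_lt (mul_pos hq3 hq1)) hr3 hr1 h31 p.2 0 hcos0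
    have t3 := term_le (le_of_lt (mul_pos hq1 hq2)) hr1 hr2 h12
      (2 * Real.pi - p.1 - p.2) (2 * Real.pi - 0 - 0) hcos2π
    exact add_le_add (add_le_add t1 t2) t3
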